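/- Define the polynomials H_n ∈ ℝ[p] by H_0 = 1 and H_n = (p/n) Σ_{k=1}^{n} (−1)^{k+1} B_k(1/2) H_{n−k} for n ≥ 1, where B_k(1/2) is the value of the k-th Bernoulli polynomial at 1/2 (so H_n(p) = G_n(p, 1/2), the sequence from the recursion G_n(p,t) = (p/n) Σ_{k=1}^{n} (−1)^{k+1} B_k(t) G_{n−k}(p,t) evaluated at t = 1/2, viewed as a polynomial in p). Then for every n ≥ 1, the polynomial H_{2n} has degree exactly n in p. -/

import Mathlib

open Finset Polynomial

/-- The `k`-th Bernoulli polynomial evaluated at a real number `t`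
(generating function `u e^{tu}/(e^u - 1)`, so `B 1 t = t - 1/2`). -/
noncomputable def bern (k : ℕ) (t : ℝ) : ℝ :=
  Polynomial.aeval t (Polynomial.bernoulli k)

/-- Symmetry of Bernoulli polynomials: `Bₙ(1 - X) = (-1)ⁿ Bₙ(X)`. -/
lemma bernoulli_comp_one_sub (n : ℕ) :
    (Polynomial.bernoulli n).comp (1 - Polynomial.X) =
      Polynomial.C ((-1 : ℚ) ^ n) * Polynomial.bernoulli n := by
  induction n with
  | zero => simp
  | succ n ih =>
    set p : ℚ[X] := (Polynomial.bernoulli (n + 1)).comp (1 - Polynomial.X) -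
      Polynomial.C ((-1 : ℚ) ^ (n + 1)) * Polynomial.bernoulli (n + 1) with hp
    have hder : Polynomial.derivative p = 0 := by
      rw [hp, map_sub, Polynomial.derivative_comp, Polynomial.derivative_mul,
        Polynomial.derivative_C, Polynomial.derivative_bernoulli_add_one]
      rw [show ((n : ℚ[X]) + 1) = Polynomial.C ((n : ℚ) + 1) by
        simp [Polynomial.C_eq_natCast, add_comm]]
      have : (Polynomial.C ((n : ℚ) + 1) * Polynomial.bernoulli n).comp (1 - Polynomial.X) =
          Polynomial.C ((n : ℚ) + 1) * ((Polynomial.bernoulli n).comp (1 - Polynomial.X)) := by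
        simp [Polynomial.mul_comp]
      rw [this, ih]
      have : Polynomial.derivative (1 - Polynomial.X : ℚ[X]) = -1 := by
        simp
      rw [this]
      simp only [pow_succ, map_neg, map_mul, map_one]
      ring
    have hc : p = Polynomial.C (p.coeff 0) := Polynomial.eq_C_of_derivative_eq_zero hder
    have h0 : p.eval 0 = 0 := by
      rw [hp]
      simp only [Polynomial.eval_sub, Polynomial.eval_comp, Polynomial.eval_sub,
        Polynomial.eval_one, Polynomial.eval_X, Polynomial.eval_mul, Polynomial.eval_C, sub_zero]
      rw [Polynomial.bernoulli_eval_one, Polynomial.bernoulli_eval_zero,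
        bernoulli'_eq_bernoulli]
      ring
    have : p = 0 := by
      rw [hc] at h0 ⊢
      simp only [Polynomial.eval_C] at h0
      rw [h0, map_zero]
    exact sub_eq_zero.mp (hp ▸ this)

lemma bern_odd_half {k : ℕ} (hk : Odd k) : bern k (1 / 2) = 0 := by
  have key : (Polynomial.bernoulli k).eval (1 / 2 : ℚ) = 0 := by
    have h := congrArg (Polynomial.eval (1 / 2 : ℚ)) (bernoulli_comp_one_sub k)
    rw [Polynomial.eval_comp, Polynomial.eval_mul, Polynomial.eval_C] at h
    simp only [Polynomial.eval_sub, Polynomial.eval_one, Polynomial.eval_X] at h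
    norm_num at h
    rw [hk.neg_one_pow] at h
    linarith
  have : bern k (1 / 2) = (((Polynomial.bernoulli k).eval (1 / 2 : ℚ) : ℚ) : ℝ) := by
    rw [bern, show ((1 : ℝ) / 2) = algebraMap ℚ ℝ (1 / 2 : ℚ) by norm_num,
      Polynomial.aeval_algebraMap_apply_eq_algebraMap_eval]
    rfl
  rw [this, key]; norm_num

lemma bern_two_half : bern 2 (1 / 2) = -(1 / 12) := by
  have : (Polynomial.bernoulli 2) =
      Polynomial.monomial 2 (1 : ℚ) + Polynomial.monomial 1 (-1 : ℚ)
        + Polynomial.monomial 0 (1 / 6 : ℚ) := by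
    rw [Polynomial.bernoulli]
    rw [Finset.sum_range_succ, Finset.sum_range_succ, Finset.sum_range_one]
    norm_num [_root_.bernoulli_one, bernoulli_eq_bernoulli'_of_ne_one, bernoulli'_two]
  rw [bern, this]
  simp only [map_add, Polynomial.aeval_monomial]
  norm_num

/-- viewing `Gₙ(p, 1/2)` as a polynomial `Hₙ ∈ ℝ[p]`
(`H₀ = 1`, `Hₙ = (p/n) ∑_{k=1}^n (-1)^{k+1} Bₖ(1/2) H_{n-k}`),
the polynomial `H_{2n}` has degree exactly `n` in `p`. -/
theorem H_even_degree
    (H : ℕ → Polynomial ℝ) (hH0 : H 0 = 1)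
    (hH : ∀ n : ℕ, 1 ≤ n →
      H n = Polynomial.C (1 / (n : ℝ)) * Polynomial.X *
        ∑ k ∈ Finset.Icc 1 n,
          Polynomial.C ((-1 : ℝ) ^ (k + 1) * bern k (1 / 2)) * H (n - k)) :
    ∀ n : ℕ, 1 ≤ n → (H (2 * n)).degree = n := by
  have key : ∀ n : ℕ, H (2 * n + 1) = 0 ∧ (H (2 * n)).degree = n ∧
      0 < (H (2 * n)).leadingCoeff := by
    intro n
    induction n using Nat.strong_induction_on with
    | _ n IH =>
    constructor
    · -- odd case : H (2n+1) = 0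
      rw [hH (2 * n + 1) (by omega)]
      have hsum : (∑ k ∈ Finset.Icc 1 (2 * n + 1),
          Polynomial.C ((-1 : ℝ) ^ (k + 1) * bern k (1 / 2)) * H (2 * n + 1 - k)) = 0 := by
        apply Finset.sum_eq_zero
        intro k hk
        rw [Finset.mem_Icc] at hk
        rcases Nat.even_or_odd k with hke | hko
        · obtain ⟨j, hj⟩ := hke
          have hj1 : 1 ≤ j := by omega
          have hjn : j ≤ n := by omega
          have : 2 * n + 1 - k = 2 * (n - j) + 1 := by omega
          rw [this, (IH (n - j) (by omega)).1, mul_zero]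
        · rw [bern_odd_half hko, mul_zero, map_zero, zero_mul]
      rw [hsum, mul_zero]
    · -- even case
      rcases Nat.eq_zero_or_pos n with rfl | hn
      · simp [hH0]
      -- n ≥ 1
      have h2 : (2 : ℕ) ∈ Finset.Icc 1 (2 * n) := by
        rw [Finset.mem_Icc]; omega
      obtain ⟨hd, hl⟩ := (IH (n - 1) (by omega)).2
      set d : Polynomial ℝ := H (2 * (n - 1)) with hddef
      have hdne : d ≠ 0 := fun h => by simp [h] at hl
      have hc2 : ((-1 : ℝ) ^ (2 + 1) * bern 2 (1 / 2)) = 1 / 12 := by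
        rw [bern_two_half]; norm_num
      -- the term with k = 2
      have hT : (Polynomial.C ((-1 : ℝ) ^ (2 + 1) * bern 2 (1 / 2)) *
          H (2 * n - 2)).degree = ((n - 1 : ℕ) : WithBot ℕ) := by
        have : 2 * n - 2 = 2 * (n - 1) := by omega
        rw [this, hc2, Polynomial.degree_C_mul (by norm_num), ← hddef, hd]
      -- the remaining terms
      have hR : (∑ k ∈ (Finset.Icc 1 (2 * n)).erase 2,
          Polynomial.C ((-1 : ℝ) ^ (k + 1) * bern k (1 / 2)) * H (2 * n - k)).degree
            < ((n - 1 : ℕ) : WithBot ℕ) := by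
        refine lt_of_le_of_lt (Polynomial.degree_sum_le _ _) ?_
        rw [Finset.sup_lt_iff (by exact WithBot.bot_lt_coe _)]
        intro k hk
        have hk2 : k ≠ 2 := Finset.ne_of_mem_erase hk
        have hk' := Finset.mem_of_mem_erase hk
        rw [Finset.mem_Icc] at hk'
        rcases Nat.even_or_odd k with hke | hko
        · obtain ⟨j, hj⟩ := hke
          have hj2 : 2 ≤ j := by omega
          have hjn : j ≤ n := by omega
          have : 2 * n - k = 2 * (n - j) := by omega
          rw [this]
          refine lt_of_le_of_lt (Polynomial.degree_mul_le _ _) ?_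
          refine lt_of_le_of_lt (add_le_add Polynomial.degree_C_le le_rfl) ?_
          rw [zero_add, (IH (n - j) (by omega)).2.1]
          exact_mod_cast WithBot.coe_lt_coe.mpr (by omega)
        · rw [bern_odd_half hko, mul_zero, map_zero, zero_mul, Polynomial.degree_zero]
          exact WithBot.bot_lt_coe _
      -- assemble
      rw [hH (2 * n) (by omega), Finset.add_sum_erase _ _ h2 |>.symm]
      have hdegS : (Polynomial.C ((-1 : ℝ) ^ (2 + 1) * bern 2 (1 / 2)) * H (2 * n - 2) +
          ∑ k ∈ (Finset.Icc 1 (2 * n)).erase 2,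
            Polynomial.C ((-1 : ℝ) ^ (k + 1) * bern k (1 / 2)) * H (2 * n - k)).degree
          = ((n - 1 : ℕ) : WithBot ℕ) := by
        rw [Polynomial.degree_add_eq_left_of_degree_lt (by rw [hT]; exact hR), hT]
      have hleadS : (Polynomial.C ((-1 : ℝ) ^ (2 + 1) * bern 2 (1 / 2)) * H (2 * n - 2) +
          ∑ k ∈ (Finset.Icc 1 (2 * n)).erase 2,
            Polynomial.C ((-1 : ℝ) ^ (k + 1) * bern k (1 / 2)) * H (2 * n - k)).leadingCoeff
          = (1 / 12) * d.leadingCoeff := by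
        rw [add_comm, Polynomial.leadingCoeff_add_of_degree_lt (by rw [hT]; exact hR)]
        have : 2 * n - 2 = 2 * (n - 1) := by omega
        rw [this, hc2, ← hddef, Polynomial.leadingCoeff_mul, Polynomial.leadingCoeff_C]
      set S := Polynomial.C ((-1 : ℝ) ^ (2 + 1) * bern 2 (1 / 2)) * H (2 * n - 2) +
          ∑ k ∈ (Finset.Icc 1 (2 * n)).erase 2,
            Polynomial.C ((-1 : ℝ) ^ (k + 1) * bern k (1 / 2)) * H (2 * n - k) with hSdef
      have ha : (1 / ((2 * n : ℕ) : ℝ)) ≠ 0 := by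
        have : (0 : ℝ) < ((2 * n : ℕ) : ℝ) := by positivity
        positivity
      constructor
      · rw [Polynomial.degree_mul, Polynomial.degree_mul, Polynomial.degree_C ha,
          Polynomial.degree_X, hdegS, zero_add]
        rw [show ((1 : WithBot ℕ) : WithBot ℕ) = ((1 : ℕ) : WithBot ℕ) by rfl,
          ← Nat.cast_add]
        congr 1
        omega
      · rw [Polynomial.leadingCoeff_mul, Polynomial.leadingCoeff_mul,
          Polynomial.leadingCoeff_C, Polynomial.leadingCoeff_X, hleadS]
        have : (0 : ℝ) < 1 / ((2 * n : ℕ) : ℝ) := by positivity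
        positivity
  intro n _
  exact (key n).2.1
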